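/- Let X₁ = X₁' + N₁ where X₁' = ∑_λ λP_λ is the diagonalizable part and N₁ = ∑_λ N_λ the nilpotent part of the Jordan decomposition, and similarly X₂. Suppose X₁ and X₂ commute. For a two-variable polynomial f, f(X₁, X₂) = ∑_{λ,μ} ∑_{q₁=0}^{m_λ−1} ∑_{q₂=0}^{m_μ−1} (∂^{q₁+q₂}f/∂z₁^{q₁}∂z₂^{q₂})(λ,μ)/(q₁! q₂!) · N_λ^{q₁} P_λ N_μ^{q₂} Q_μ, with the convention N^0 = I. -/
import Mathlib


open scoped BigOperators
open Finset

private lemma key {d : ℕ} (X Pm : Matrix (Fin d) (Fin d) ℂ) (a : ℂ) (m : ℕ)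
    (hm : (X - a • 1) ^ m * Pm = 0) (i : ℕ) :
    X ^ i * Pm = ∑ q ∈ Finset.range m,
      ((i.choose q : ℂ) * a ^ (i - q)) • ((X - a • 1) ^ q * Pm) := by
  set Y := X - a • (1 : Matrix (Fin d) (Fin d) ℂ) with hY
  have hvan : ∀ q, m ≤ q → Y ^ q * Pm = 0 := by
    intro q hq
    have h1 : Y ^ q = Y ^ (q - m) * Y ^ m := by rw [← pow_add]; congr 1; omega
    rw [h1, mul_assoc, hm, mul_zero]
  have hcomm : Commute Y (a • (1 : Matrix (Fin d) (Fin d) ℂ)) :=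
    (Commute.one_right Y).smul_right a
  have hX : X = Y + a • 1 := by rw [hY]; abel
  have hcast : ∀ n : ℕ, ((n : ℕ) : Matrix (Fin d) (Fin d) ℂ) = (n : ℂ) • 1 := by
    intro n
    rw [← map_natCast (algebraMap ℂ (Matrix (Fin d) (Fin d) ℂ)), Algebra.algebraMap_eq_smul_one]
  have expand : X ^ i * Pm = ∑ q ∈ Finset.range (i + 1),
      ((i.choose q : ℂ) * a ^ (i - q)) • (Y ^ q * Pm) := by
    conv_lhs => rw [hX]
    rw [Commute.add_pow hcomm, Finset.sum_mul]
    refine Finset.sum_congr rfl fun q hq => ?_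
    rw [smul_pow, one_pow, hcast]
    simp only [mul_smul_comm, smul_mul_assoc, mul_one, smul_smul]

  rw [expand]
  have h1 : ∑ q ∈ range (i + 1), ((i.choose q : ℂ) * a ^ (i - q)) • (Y ^ q * Pm)
      = ∑ q ∈ range (max (i + 1) m), ((i.choose q : ℂ) * a ^ (i - q)) • (Y ^ q * Pm) := by
    refine Finset.sum_subset (Finset.range_subset_range.2 (le_max_left _ _)) fun q _ hq => ?_
    have hiq : i < q := by
      have := Finset.mem_range.not.1 hq; omega
    rw [Nat.choose_eq_zero_of_lt hiq]
    simp
  have h2 : ∑ q ∈ range m, ((i.choose q : ℂ) * a ^ (i - q)) • (Y ^ q * Pm)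
      = ∑ q ∈ range (max (i + 1) m), ((i.choose q : ℂ) * a ^ (i - q)) • (Y ^ q * Pm) := by
    refine Finset.sum_subset (Finset.range_subset_range.2 (le_max_right _ _)) fun q _ hq => ?_
    have hmq : m ≤ q := by have := Finset.mem_range.not.1 hq; omega
    rw [hvan q hmq, smul_zero]
  rw [h1]; exact h2.symm

private lemma nil_pow {d : ℕ} (X Pm : Matrix (Fin d) (Fin d) ℂ) (a : ℂ)
    (hP : Pm * Pm = Pm) (hXP : X * Pm = Pm * X) (q : ℕ) :
    ((X - a • 1) * Pm) ^ q * Pm = (X - a • 1) ^ q * Pm := by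
  have hc : Commute (X - a • 1) Pm :=
    Commute.sub_left hXP ((Commute.one_left Pm).smul_left a)
  have hPq : ∀ n, Pm ^ n * Pm = Pm := by
    intro n; induction n with
    | zero => simp
    | succ n ih => rw [pow_succ, mul_assoc, hP, ih]
  rw [hc.mul_pow, mul_assoc, hPq]

private lemma sum_swap4 {M : Type*} [AddCommMonoid M] {ι₁ ι₂ ι₃ ι₄ : Type*}
    (s₁ : Finset ι₁) (s₂ : Finset ι₂) (s₃ : Finset ι₃) (s₄ : ι₃ → Finset ι₄)
    (f : ι₁ → ι₂ → ι₃ → ι₄ → M) :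
    ∑ i ∈ s₁, ∑ j ∈ s₂, ∑ a ∈ s₃, ∑ b ∈ s₄ a, f i j a b
      = ∑ a ∈ s₃, ∑ b ∈ s₄ a, ∑ i ∈ s₁, ∑ j ∈ s₂, f i j a b := by
  calc ∑ i ∈ s₁, ∑ j ∈ s₂, ∑ a ∈ s₃, ∑ b ∈ s₄ a, f i j a b
      = ∑ i ∈ s₁, ∑ a ∈ s₃, ∑ j ∈ s₂, ∑ b ∈ s₄ a, f i j a b :=
        Finset.sum_congr rfl fun i _ => Finset.sum_comm
    _ = ∑ a ∈ s₃, ∑ i ∈ s₁, ∑ j ∈ s₂, ∑ b ∈ s₄ a, f i j a b := Finset.sum_comm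
    _ = ∑ a ∈ s₃, ∑ i ∈ s₁, ∑ b ∈ s₄ a, ∑ j ∈ s₂, f i j a b :=
        Finset.sum_congr rfl fun a _ => Finset.sum_congr rfl fun i _ => Finset.sum_comm
    _ = ∑ a ∈ s₃, ∑ b ∈ s₄ a, ∑ i ∈ s₁, ∑ j ∈ s₂, f i j a b :=
        Finset.sum_congr rfl fun a _ => Finset.sum_comm

/-- Two-variable spectral mapping theorem with nilpotent corrections: if `X₁` and `X₂` have
Jordan decompositions `X₁ = ∑ (a • P a + N₁ a)`, `X₂ = ∑ (b • Q b + N₂ b)` with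
`N₁ a = (X₁ − a•1) * P a`, `N₂ b = (X₂ − b•1) * Q b` of indices `m₁ a`, `m₂ b`, and if
`X₁` commutes with `X₂` (so all spectral data of `X₁` commute with those of `X₂`), then for
the two-variable polynomial `f(z₁,z₂) = ∑_{i,j<D} c i j z₁^i z₂^j`,
`f(X₁,X₂) = ∑_{a,b} ∑_{q₁<m₁ a} ∑_{q₂<m₂ b}
  (∂^{q₁+q₂} f/∂z₁^{q₁}∂z₂^{q₂})(a,b)/(q₁! q₂!) • (N₁ a)^{q₁} P a (N₂ b)^{q₂} Q b`
(with `N^0 = 1`). -/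
theorem stmt14 (d : ℕ) (X₁ X₂ : Matrix (Fin d) (Fin d) ℂ)
    (hX : X₁ * X₂ = X₂ * X₁)
    (S₁ S₂ : Finset ℂ) (P Q N₁ N₂ : ℂ → Matrix (Fin d) (Fin d) ℂ) (m₁ m₂ : ℂ → ℕ)
    (hPi : ∀ a ∈ S₁, P a * P a = P a)
    (hPo : ∀ a ∈ S₁, ∀ a' ∈ S₁, a ≠ a' → P a * P a' = 0)
    (hPs : ∑ a ∈ S₁, P a = 1)
    (hPX : ∀ a ∈ S₁, X₁ * P a = P a * X₁)
    (hN₁ : ∀ a ∈ S₁, N₁ a = (X₁ - a • 1) * P a)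
    (hm₁ : ∀ a ∈ S₁, (X₁ - a • 1) ^ m₁ a * P a = 0)
    (hQi : ∀ b ∈ S₂, Q b * Q b = Q b)
    (hQo : ∀ b ∈ S₂, ∀ b' ∈ S₂, b ≠ b' → Q b * Q b' = 0)
    (hQs : ∑ b ∈ S₂, Q b = 1)
    (hQX : ∀ b ∈ S₂, X₂ * Q b = Q b * X₂)
    (hN₂ : ∀ b ∈ S₂, N₂ b = (X₂ - b • 1) * Q b)
    (hm₂ : ∀ b ∈ S₂, (X₂ - b • 1) ^ m₂ b * Q b = 0)
    (hPQ : ∀ a ∈ S₁, ∀ b ∈ S₂, Commute (P a) (Q b))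
    (hPX₂ : ∀ a ∈ S₁, Commute (P a) X₂)
    (hQX₁ : ∀ b ∈ S₂, Commute (Q b) X₁)
    (D : ℕ) (c : ℕ → ℕ → ℂ) :
    ∑ i ∈ Finset.range D, ∑ j ∈ Finset.range D, c i j • (X₁ ^ i * X₂ ^ j)
      = ∑ a ∈ S₁, ∑ b ∈ S₂,
          ∑ q₁ ∈ Finset.range (m₁ a), ∑ q₂ ∈ Finset.range (m₂ b),
            (∑ i ∈ Finset.range D, ∑ j ∈ Finset.range D,
                c i j * (i.choose q₁) * a ^ (i - q₁) * (j.choose q₂) * b ^ (j - q₂))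
              • ((N₁ a) ^ q₁ * P a * (N₂ b) ^ q₂ * Q b) := by
  have hNP : ∀ a ∈ S₁, ∀ q, (N₁ a) ^ q * P a = (X₁ - a • 1) ^ q * P a := by
    intro a ha q
    rw [hN₁ a ha]
    exact nil_pow _ _ _ (hPi a ha) (hPX a ha) q
  have hNQ : ∀ b ∈ S₂, ∀ q, (N₂ b) ^ q * Q b = (X₂ - b • 1) ^ q * Q b := by
    intro b hb q
    rw [hN₂ b hb]
    exact nil_pow _ _ _ (hQi b hb) (hQX b hb) q
  -- expand each power product over projections
  have step1 : ∀ i j : ℕ, c i j • (X₁ ^ i * X₂ ^ j)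
      = ∑ a ∈ S₁, ∑ b ∈ S₂, ∑ q₁ ∈ Finset.range (m₁ a), ∑ q₂ ∈ Finset.range (m₂ b),
          (c i j * (i.choose q₁) * a ^ (i - q₁) * (j.choose q₂) * b ^ (j - q₂))
            • (((X₁ - a • 1) ^ q₁ * P a) * ((X₂ - b • 1) ^ q₂ * Q b)) := by
    intro i j
    have e1 : X₁ ^ i * X₂ ^ j = ∑ a ∈ S₁, ∑ b ∈ S₂, (X₁ ^ i * P a) * (X₂ ^ j * Q b) := by
      calc X₁ ^ i * X₂ ^ j = (X₁ ^ i * 1) * (X₂ ^ j * 1) := by rw [mul_one, mul_one]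
        _ = (X₁ ^ i * ∑ a ∈ S₁, P a) * (X₂ ^ j * ∑ b ∈ S₂, Q b) := by rw [hPs, hQs]
        _ = ∑ a ∈ S₁, ∑ b ∈ S₂, (X₁ ^ i * P a) * (X₂ ^ j * Q b) := by
            rw [Finset.mul_sum, Finset.mul_sum, Finset.sum_mul]
            exact Finset.sum_congr rfl fun a _ => Finset.mul_sum _ _ _
    rw [e1, Finset.smul_sum]
    refine Finset.sum_congr rfl fun a ha => ?_
    rw [Finset.smul_sum]
    refine Finset.sum_congr rfl fun b hb => ?_
    rw [key X₁ (P a) a (m₁ a) (hm₁ a ha) i, key X₂ (Q b) b (m₂ b) (hm₂ b hb) j,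
      Finset.sum_mul, Finset.smul_sum]
    refine Finset.sum_congr rfl fun q₁ _ => ?_
    rw [Finset.mul_sum, Finset.smul_sum]
    refine Finset.sum_congr rfl fun q₂ _ => ?_
    rw [smul_mul_assoc, mul_smul_comm, smul_smul, smul_smul]
    congr 1
    ring
  calc ∑ i ∈ Finset.range D, ∑ j ∈ Finset.range D, c i j • (X₁ ^ i * X₂ ^ j)
      = ∑ i ∈ Finset.range D, ∑ j ∈ Finset.range D, ∑ a ∈ S₁, ∑ b ∈ S₂,
          ∑ q₁ ∈ Finset.range (m₁ a), ∑ q₂ ∈ Finset.range (m₂ b),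
          (c i j * (i.choose q₁) * a ^ (i - q₁) * (j.choose q₂) * b ^ (j - q₂))
            • (((X₁ - a • 1) ^ q₁ * P a) * ((X₂ - b • 1) ^ q₂ * Q b)) :=
        Finset.sum_congr rfl fun i _ => Finset.sum_congr rfl fun j _ => step1 i j
    _ = ∑ a ∈ S₁, ∑ b ∈ S₂, ∑ i ∈ Finset.range D, ∑ j ∈ Finset.range D,
          ∑ q₁ ∈ Finset.range (m₁ a), ∑ q₂ ∈ Finset.range (m₂ b),
          (c i j * (i.choose q₁) * a ^ (i - q₁) * (j.choose q₂) * b ^ (j - q₂))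
            • (((X₁ - a • 1) ^ q₁ * P a) * ((X₂ - b • 1) ^ q₂ * Q b)) :=
        sum_swap4 _ _ _ _ _
    _ = ∑ a ∈ S₁, ∑ b ∈ S₂, ∑ q₁ ∈ Finset.range (m₁ a), ∑ q₂ ∈ Finset.range (m₂ b),
          ∑ i ∈ Finset.range D, ∑ j ∈ Finset.range D,
          (c i j * (i.choose q₁) * a ^ (i - q₁) * (j.choose q₂) * b ^ (j - q₂))
            • (((X₁ - a • 1) ^ q₁ * P a) * ((X₂ - b • 1) ^ q₂ * Q b)) :=
        Finset.sum_congr rfl fun a _ => Finset.sum_congr rfl fun b _ => sum_swap4 _ _ _ _ _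
    _ = ∑ a ∈ S₁, ∑ b ∈ S₂, ∑ q₁ ∈ Finset.range (m₁ a), ∑ q₂ ∈ Finset.range (m₂ b),
          (∑ i ∈ Finset.range D, ∑ j ∈ Finset.range D,
              c i j * (i.choose q₁) * a ^ (i - q₁) * (j.choose q₂) * b ^ (j - q₂))
            • ((N₁ a) ^ q₁ * P a * (N₂ b) ^ q₂ * Q b) := by
        refine Finset.sum_congr rfl fun a ha => Finset.sum_congr rfl fun b hb =>
          Finset.sum_congr rfl fun q₁ _ => Finset.sum_congr rfl fun q₂ _ => ?_
        rw [Finset.sum_smul]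
        refine Finset.sum_congr rfl fun i _ => ?_
        rw [Finset.sum_smul]
        refine Finset.sum_congr rfl fun j _ => ?_
        congr 1
        rw [mul_assoc ((N₁ a) ^ q₁ * P a), hNQ b hb q₂, hNP a ha q₁, mul_assoc]
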